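/- For a d×d P-matrix R of the lower-Hessenberg-transpose form (R_{ii} > 0, R_{i,i−1} < 0 for 2 ≤ i ≤ d, R_{ij} = 0 for j ≤ i−2), the following holds: if r ∈ ℝ^d satisfies R_{21} r₁ e₁ + R_{D,D} r_D = 0 where D = {2,…,d}, R_{D,D} is the principal submatrix of R on D, r_D = (r₂,…,r_d), e₁ is the first standard basis vector of ℝ^{d−1}, and r₁ < 0, then r₂ < 0. -/

import Mathlib

/-- `R` is a P-matrix: all principal minors are positive. -/
def IsPMatrix {d : ℕ} (R : Matrix (Fin d) (Fin d) ℝ) : Prop :=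
  ∀ D : Finset (Fin d), D.Nonempty →
    0 < (R.submatrix (fun i : D => (i : Fin d)) (fun j : D => (j : Fin d))).det

lemma pmatrix_submatrix_pos {n k : ℕ} (R : Matrix (Fin n) (Fin n) ℝ)
    (hP : IsPMatrix R) (f : Fin k → Fin n) (hf : Function.Injective f) :
    0 < (R.submatrix f f).det := by
  classical
  cases k with
  | zero => simp [Matrix.det_fin_zero]
  | succ k => ?_
  set D : Finset (Fin n) := Finset.univ.image f with hD
  have hDne : D.Nonempty := ⟨f 0, by simp [hD]⟩
  have hmem : ∀ i, f i ∈ D := fun i => by simp [hD]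
  have hbij : Function.Bijective (fun i : Fin (k+1) => (⟨f i, hmem i⟩ : D)) := by
    constructor
    · intro a b hab
      exact hf (by simpa using congrArg Subtype.val hab)
    · rintro ⟨x, hx⟩
      simp only [hD, Finset.mem_image, Finset.mem_univ, true_and] at hx
      obtain ⟨i, hi⟩ := hx
      exact ⟨i, by simp [hi]⟩
  let e : Fin (k+1) ≃ D := Equiv.ofBijective _ hbij
  have key : R.submatrix f f =
      (R.submatrix (fun i : D => (i : Fin n)) (fun j : D => (j : Fin n))).submatrix e e := by
    ext i j; simp [e, Equiv.ofBijective, Matrix.submatrix]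
  rw [key, Matrix.det_submatrix_equiv_self]
  exact hP D hDne

/-- For a P-matrix `R` (dimension `d + 2 ≥ 2`) with
positive diagonal, negative subdiagonal and vanishing entries below the
subdiagonal, if `r` satisfies `R₂₁ r₁ e₁ + R_{D,D} r_D = 0` with
`D = {2,…,d}` (equivalently `(R r)_i = 0` for all `i ≠ 1`, since the entries
of `R` below the subdiagonal vanish) and `r₁ < 0`, then `r₂ < 0`. -/
theorem stmt_15 {d : ℕ} (R : Matrix (Fin (d + 2)) (Fin (d + 2)) ℝ)
    (hP : IsPMatrix R)
    (hdiag : ∀ i, 0 < R i i)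
    (hsub : ∀ i j : Fin (d + 2), (j : ℕ) + 1 = (i : ℕ) → R i j < 0)
    (hzero : ∀ i j : Fin (d + 2), (j : ℕ) + 2 ≤ (i : ℕ) → R i j = 0)
    (r : Fin (d + 2) → ℝ)
    (heq : ∀ i : Fin (d + 2), i ≠ 0 → R.mulVec r i = 0)
    (hr1 : r 0 < 0) :
    r 1 < 0 := by
  classical
  set A : Matrix (Fin (d + 1)) (Fin (d + 1)) ℝ := R.submatrix Fin.succ Fin.succ with hA
  set x : Fin (d + 1) → ℝ := fun i => r i.succ with hx
  set c : ℝ := -(R 1 0 * r 0) with hc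
  have hcneg : c < 0 := by
    have h10 : R 1 0 < 0 := hsub 1 0 (by simp)
    have : 0 < R 1 0 * r 0 := mul_pos_of_neg_of_neg h10 hr1
    linarith
  have hb : A.mulVec x = Pi.single 0 c := by
    funext i
    have hAx : A.mulVec x i = R.mulVec r i.succ - R i.succ 0 * r 0 := by
      simp only [Matrix.mulVec, dotProduct, hA, hx, Matrix.submatrix_apply]
      rw [Fin.sum_univ_succ (f := fun j => R i.succ j * r j)]
      ring
    rw [hAx, heq i.succ (Fin.succ_ne_zero i)]
    by_cases hi : i = 0
    · subst hi; simp [hc]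
    · have : R i.succ 0 = 0 := by
        apply hzero
        have : 1 ≤ (i : ℕ) := Nat.one_le_iff_ne_zero.mpr (fun h => hi (Fin.ext h))
        simp [Fin.val_succ]; omega
      rw [this]
      rw [Pi.single_eq_of_ne hi]
      ring
  have hdetA : 0 < A.det :=
    pmatrix_submatrix_pos R hP Fin.succ (Fin.succ_injective _)
  have hadj : 0 < A.adjugate 0 0 := by
    rw [Matrix.adjugate_apply]
    rw [Matrix.det_succ_row_zero]
    rw [Fin.sum_univ_succ]
    have hz : ∀ j : Fin d, (-1 : ℝ) ^ ((j.succ : Fin (d+1)) : ℕ) *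
        (A.updateRow 0 (Pi.single 0 1)) 0 j.succ *
        ((A.updateRow 0 (Pi.single 0 1)).submatrix Fin.succ j.succ.succAbove).det = 0 := by
      intro j
      have : (A.updateRow 0 (Pi.single 0 1)) 0 j.succ = 0 := by
        simp [Pi.single_eq_of_ne (Fin.succ_ne_zero j)]
      rw [this]; ring
    rw [Finset.sum_eq_zero (fun j _ => hz j), add_zero]
    have h00 : (A.updateRow 0 (Pi.single 0 1)) 0 0 = 1 := by simp
    rw [h00]
    have hsubm : (A.updateRow 0 (Pi.single 0 1)).submatrix Fin.succ (Fin.succAbove 0) =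
        R.submatrix (Fin.succ ∘ Fin.succ) (Fin.succ ∘ Fin.succ) := by
      ext i j
      rw [Matrix.submatrix_apply, Matrix.updateRow_ne (Fin.succ_ne_zero i)]
      simp [hA, Fin.succAbove]
    rw [hsubm]
    have hpos := pmatrix_submatrix_pos R hP (Fin.succ ∘ Fin.succ)
      (Function.Injective.comp (Fin.succ_injective (d+1)) (Fin.succ_injective d))
    simp only [Fin.val_zero, pow_zero, one_mul, mul_one]
    exact hpos
  have hkey : A.det * x 0 = A.adjugate 0 0 * c := by
    have h1 : A.adjugate.mulVec (A.mulVec x) = A.det • x := by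
      rw [Matrix.mulVec_mulVec, Matrix.adjugate_mul, Matrix.smul_mulVec,
        Matrix.one_mulVec]
    rw [hb] at h1
    have h2 := congrFun h1 0
    simp only [Pi.smul_apply, smul_eq_mul] at h2
    rw [← h2]
    rw [Matrix.mulVec_single]
    simp
  have : A.det * x 0 < 0 := by
    rw [hkey]; exact mul_neg_of_pos_of_neg hadj hcneg
  have hx0 : x 0 < 0 := by
    by_contra h
    push_neg at h
    nlinarith
  simpa [hx] using hx0
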